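/- Let a_j = Σ_{t=0}^{j-1} (j-t)(2n)^{n-t} for 1 ≤ j ≤ n, and for 1 ≤ k ≤ n-1 let D_k = {a_{j+k} - a_j : 1 ≤ j ≤ n-k}. If S ⊆ A - A is convex and k_1 < k_2 are such that |S ∩ D_{k_2}| ≥ 2, then S ∩ D_{k_1} = ∅. In particular, there is at most one k with |S ∩ D_k| ≥ 2. -/
import Mathlib


open Pointwise

/-- A finite set `S = {s_1 < ... < s_m} ⊂ ℝ` is convex if its consecutive differences
are strictly increasing. -/
def ConvexFinset (S : Finset ℝ) : Prop :=
  ∀ i : ℕ, ∀ h : i + 2 < S.card,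
    (S.orderIsoOfFin rfl ⟨i + 2, h⟩ : ℝ) - (S.orderIsoOfFin rfl ⟨i + 1, by omega⟩ : ℝ) >
    (S.orderIsoOfFin rfl ⟨i + 1, by omega⟩ : ℝ) - (S.orderIsoOfFin rfl ⟨i, by omega⟩ : ℝ)

/-- with `a_j = Σ_{t=0}^{j-1} (j-t)(2n)^{n-t}`, `A = {a_1, ..., a_n}` and
`D_k = {a_{j+k} - a_j : 1 ≤ j ≤ n-k}`, if `S ⊆ A - A` is convex, `k₁ < k₂` and
`|S ∩ D_{k₂}| ≥ 2`, then `S ∩ D_{k₁} = ∅`. -/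
lemma diff_eq (n : ℕ) (M : ℝ) (a : ℕ → ℝ)
    (ha : ∀ j, a j = ∑ t ∈ Finset.range j, ((j - t : ℕ) : ℝ) * M ^ (n - t))
    (u v : ℕ) (huv : u ≤ v) :
    a v - a u = ∑ t ∈ Finset.range v, (((v - t : ℕ) : ℝ) - ((u - t : ℕ) : ℝ)) * M ^ (n - t) := by
  have h1 : a u = ∑ t ∈ Finset.range v, ((u - t : ℕ) : ℝ) * M ^ (n - t) := by
    rw [ha u]
    refine Finset.sum_subset (Finset.range_subset_range.mpr huv) ?_
    intro t _ ht
    have : u - t = 0 := by simp at ht; omega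
    simp [this]
  rw [ha v, h1, ← Finset.sum_sub_distrib]
  congr 1; ext t; ring

lemma geom_aux (M : ℝ) (hM : 2 ≤ M) (n m : ℕ) (hm : m ≤ n) :
    ∑ t ∈ Finset.range m, M ^ (n - t) ≤ M ^ n + M ^ n / (M - 1) := by
  have hM1 : (0:ℝ) < M - 1 := by linarith
  have key : ∀ t ∈ Finset.range m, (M - 1) * M ^ (n - t)
      = M ^ (n + 1 - t) - M ^ (n + 1 - (t + 1)) := by
    intro t ht
    simp only [Finset.mem_range] at ht
    have h1 : n + 1 - (t + 1) = n - t := by omega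
    have h2 : n + 1 - t = (n - t) + 1 := by omega
    rw [h1, h2, pow_succ]
    ring
  have htel : (M - 1) * ∑ t ∈ Finset.range m, M ^ (n - t)
      = M ^ (n + 1) - M ^ (n + 1 - m) := by
    rw [Finset.mul_sum, Finset.sum_congr rfl key, Finset.sum_range_sub' (fun t => M ^ (n + 1 - t))]
    norm_num
  have hpos : (0:ℝ) < M ^ (n + 1 - m) := by positivity
  have hd : M ^ n / (M - 1) * (M - 1) = M ^ n := div_mul_cancel₀ _ (ne_of_gt hM1)
  nlinarith [pow_succ M n, sq_nonneg M]

lemma d_bounds (n : ℕ) (M : ℝ) (hM : 2 ≤ M) (a : ℕ → ℝ)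
    (ha : ∀ j, a j = ∑ t ∈ Finset.range j, ((j - t : ℕ) : ℝ) * M ^ (n - t))
    (u v : ℕ) (hu : 1 ≤ u) (huv : u ≤ v) (hv : v ≤ n) :
    ((v - u : ℕ) : ℝ) * M ^ n ≤ a v - a u ∧
      a v - a u ≤ ((v - u : ℕ) : ℝ) * (M ^ n + M ^ n / (M - 1)) := by
  have hM0 : (0:ℝ) < M := by linarith
  rw [diff_eq n M a ha u v huv]
  have hnonneg : ∀ t ∈ Finset.range v,
      0 ≤ (((v - t : ℕ) : ℝ) - ((u - t : ℕ) : ℝ)) * M ^ (n - t) := by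
    intro t _
    have h1 : (u - t : ℕ) ≤ v - t := by omega
    have : ((u - t : ℕ) : ℝ) ≤ ((v - t : ℕ) : ℝ) := by exact_mod_cast h1
    have : (0:ℝ) ≤ M ^ (n - t) := by positivity
    nlinarith
  constructor
  · have h0 : (0:ℕ) ∈ Finset.range v := Finset.mem_range.mpr (by omega)
    calc ((v - u : ℕ) : ℝ) * M ^ n = (((v - 0 : ℕ) : ℝ) - ((u - 0 : ℕ) : ℝ)) * M ^ (n - 0) := by
          rw [Nat.sub_zero, Nat.sub_zero, Nat.sub_zero, Nat.cast_sub huv]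
      _ ≤ _ := Finset.single_le_sum hnonneg h0
  · have hstep : ∑ t ∈ Finset.range v, (((v - t : ℕ) : ℝ) - ((u - t : ℕ) : ℝ)) * M ^ (n - t)
        ≤ ∑ t ∈ Finset.range v, ((v - u : ℕ) : ℝ) * M ^ (n - t) := by
      refine Finset.sum_le_sum ?_
      intro t _
      have h2 : (v - t : ℕ) ≤ (u - t) + (v - u) := by omega
      have h2' : ((v - t : ℕ) : ℝ) ≤ ((u - t : ℕ) : ℝ) + ((v - u : ℕ) : ℝ) := by
        exact_mod_cast h2
      have : (0:ℝ) ≤ M ^ (n - t) := by positivity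
      nlinarith
    rw [← Finset.mul_sum] at hstep
    refine hstep.trans ?_
    have hg := geom_aux M hM n v hv
    have : (0:ℝ) ≤ ((v - u : ℕ) : ℝ) := Nat.cast_nonneg _
    nlinarith

lemma convex_gap (S : Finset ℝ) (hconv : ConvexFinset S) (x y z : ℝ)
    (hx : x ∈ S) (hy : y ∈ S) (hz : z ∈ S) (hxy : x < y) (hyz : y < z)
    (hmax : ∀ w ∈ S, w < y → w ≤ x) : y - x < z - y := by
  set e := S.orderIsoOfFin rfl with he
  set i := e.symm ⟨x, hx⟩ with hi
  set p := e.symm ⟨y, hy⟩ with hp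
  set q := e.symm ⟨z, hz⟩ with hq
  have hip : i < p := by
    rw [hi, hp, OrderIso.lt_iff_lt]
    exact Subtype.mk_lt_mk.mpr hxy
  have hpq : p < q := by
    rw [hp, hq, OrderIso.lt_iff_lt]
    exact Subtype.mk_lt_mk.mpr hyz
  have hiv : (i : ℕ) < (p : ℕ) := hip
  have hpv : (p : ℕ) < (q : ℕ) := hpq
  have hpi1 : (p : ℕ) = (i : ℕ) + 1 := by
    by_contra hne
    have h1 : (i : ℕ) + 1 < (p : ℕ) := by omega
    have hlt1 : (i : ℕ) + 1 < S.card := lt_trans h1 p.isLt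
    set w := e ⟨(i : ℕ) + 1, hlt1⟩ with hw
    have hw1 : x < (w : ℝ) := by
      have : e i < w := by
        rw [hw]; exact e.strictMono (by simp [Fin.lt_def])
      rw [hi, OrderIso.apply_symm_apply] at this
      exact this
    have hw2 : (w : ℝ) < y := by
      have : w < e p := by
        rw [hw]; exact e.strictMono (by simp [Fin.lt_def]; omega)
      rw [hp, OrderIso.apply_symm_apply] at this
      exact this
    exact absurd (hmax w w.prop hw2) (not_le.mpr hw1)
  have hcard : (i : ℕ) + 2 < S.card := by
    have := q.isLt; omega
  have hc := hconv (i : ℕ) hcard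
  have hei : e ⟨(i : ℕ), by omega⟩ = ⟨x, hx⟩ := by
    rw [show (⟨(i : ℕ), by omega⟩ : Fin S.card) = i from Fin.ext rfl, hi,
      OrderIso.apply_symm_apply]
  have hep : e ⟨(i : ℕ) + 1, by omega⟩ = ⟨y, hy⟩ := by
    rw [show (⟨(i : ℕ) + 1, by omega⟩ : Fin S.card) = p from Fin.ext hpi1.symm, hp,
      OrderIso.apply_symm_apply]
  have hzq : (e ⟨(i : ℕ) + 2, hcard⟩ : ℝ) ≤ z := by
    have : e ⟨(i : ℕ) + 2, hcard⟩ ≤ e q := by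
      apply e.monotone
      rw [Fin.le_def]; simp; omega
    rw [hq, OrderIso.apply_symm_apply] at this
    exact this
  rw [hei, hep] at hc
  simp only at hc
  linarith

theorem statement10 (n : ℕ) (hn : 1 ≤ n) (a : ℕ → ℝ)
    (ha : ∀ j, a j = ∑ t ∈ Finset.range j, ((j - t : ℕ) : ℝ) * (2 * (n : ℝ)) ^ (n - t))
    (A : Finset ℝ) (hA : A = (Finset.Icc 1 n).image a)
    (D : ℕ → Finset ℝ)
    (hD : ∀ k, D k = (Finset.Icc 1 (n - k)).image (fun j => a (j + k) - a j))
    (S : Finset ℝ) (hS : S ⊆ A - A) (hSconv : ConvexFinset S)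
    (k₁ k₂ : ℕ) (hk₁ : 1 ≤ k₁) (hk₂ : k₂ ≤ n - 1) (hlt : k₁ < k₂)
    (h2 : 2 ≤ (S ∩ D k₂).card) :
    S ∩ D k₁ = ∅ := by
  have hk₂n : k₂ + 1 ≤ n := by omega
  set M : ℝ := 2 * (n : ℝ) with hMdef
  have hn1 : (1:ℝ) ≤ (n:ℝ) := by exact_mod_cast hn
  have hM2 : 2 ≤ M := by rw [hMdef]; linarith
  have hMn : (0:ℝ) < M ^ n := by positivity
  set c : ℝ := ((n:ℝ) - 1) / (2 * (n:ℝ) - 1) with hcdef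
  have hden : (0:ℝ) < 2 * (n:ℝ) - 1 := by linarith
  have hc2 : c < 1/2 := by rw [hcdef, div_lt_iff₀ hden]; linarith
  have hc0 : 0 ≤ c := by rw [hcdef]; exact div_nonneg (by linarith) (le_of_lt hden)
  -- bounds on elements of D k
  have hDk : ∀ k, 1 ≤ k → k + 1 ≤ n → ∀ x ∈ D k,
      (k:ℝ) * M ^ n ≤ x ∧ x ≤ (k:ℝ) * M ^ n + c * M ^ n := by
    intro k hk hkn x hxD
    rw [hD k, Finset.mem_image] at hxD
    obtain ⟨j, hj, rfl⟩ := hxD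
    rw [Finset.mem_Icc] at hj
    have hjk : j + k ≤ n := by omega
    have hb := d_bounds n M hM2 a ha j (j + k) (by omega) (by omega) hjk
    have hvk : (j + k - j : ℕ) = k := by omega
    rw [hvk] at hb
    refine ⟨hb.1, hb.2.trans ?_⟩
    have hkr : (k:ℝ) ≤ (n:ℝ) - 1 := by
      have : (k:ℝ) + 1 ≤ (n:ℝ) := by exact_mod_cast hkn
      linarith
    have hM1 : M - 1 = 2 * (n:ℝ) - 1 := by rw [hMdef]
    have hdiv : (k:ℝ) * (M ^ n / (M - 1)) ≤ c * M ^ n := by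
      rw [hM1, hcdef,
        show (k:ℝ) * (M ^ n / (2 * (n:ℝ) - 1)) = ((k:ℝ) * M ^ n) / (2 * (n:ℝ) - 1) by ring,
        show ((n:ℝ) - 1) / (2 * (n:ℝ) - 1) * M ^ n = (((n:ℝ) - 1) * M ^ n) / (2 * (n:ℝ) - 1) by
          ring]
      gcongr
    linarith
  -- classification of elements of A - A
  have hAA : ∀ x ∈ A - A, x ≤ 0 ∨
      ∃ k j : ℕ, 1 ≤ j ∧ 1 ≤ k ∧ j + k ≤ n ∧ x = a (j + k) - a j := by
    intro x hx
    rw [Finset.mem_sub] at hx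
    obtain ⟨u, hu, v, hv, rfl⟩ := hx
    rw [hA, Finset.mem_image] at hu hv
    obtain ⟨u', hu', rfl⟩ := hu
    obtain ⟨v', hv', rfl⟩ := hv
    rw [Finset.mem_Icc] at hu' hv'
    rcases le_or_gt u' v' with h | h
    · left
      have hb := d_bounds n M hM2 a ha u' v' (by omega) h (by omega)
      have : (0:ℝ) ≤ ((v' - u' : ℕ) : ℝ) * M ^ n := by positivity
      linarith [hb.1]
    · right
      refine ⟨u' - v', v', by omega, by omega, by omega, ?_⟩
      have huv : v' + (u' - v') = u' := by omega
      rw [huv]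
  -- get contradiction from a point of S ∩ D k₁
  rw [← Finset.not_nonempty_iff_eq_empty]
  intro ⟨s, hs⟩
  have hsS : s ∈ S := (Finset.mem_inter.mp hs).1
  have hsD : s ∈ D k₁ := (Finset.mem_inter.mp hs).2
  obtain ⟨hs_lo, hs_hi⟩ := hDk k₁ hk₁ (by omega) s hsD
  have hne2 : (S ∩ D k₂).Nonempty := Finset.card_pos.mp (show 0 < (S ∩ D k₂).card by omega)
  set y := (S ∩ D k₂).min' hne2 with hy
  have hyin : y ∈ S ∩ D k₂ := Finset.min'_mem _ _
  obtain ⟨z, hzin, hzy⟩ := Finset.exists_mem_ne (show 1 < (S ∩ D k₂).card by omega) y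
  have hyz : y < z := lt_of_le_of_ne (Finset.min'_le _ _ hzin) (Ne.symm hzy)
  have hk₂1 : 1 ≤ k₂ := by omega
  obtain ⟨hy_lo, hy_hi⟩ := hDk k₂ hk₂1 hk₂n y (Finset.mem_inter.mp hyin).2
  obtain ⟨hz_lo, hz_hi⟩ := hDk k₂ hk₂1 hk₂n z (Finset.mem_inter.mp hzin).2
  have hyS : y ∈ S := (Finset.mem_inter.mp hyin).1
  have hzS : z ∈ S := (Finset.mem_inter.mp hzin).1
  have hk12 : (k₁:ℝ) + 1 ≤ (k₂:ℝ) := by exact_mod_cast hlt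
  have hcM : c * M ^ n ≤ (1/2) * M ^ n :=
    mul_le_mul_of_nonneg_right (le_of_lt hc2) (le_of_lt hMn)
  have hk12M : ((k₁:ℝ) + 1) * M ^ n ≤ (k₂:ℝ) * M ^ n :=
    mul_le_mul_of_nonneg_right hk12 (le_of_lt hMn)
  have hsy : s < y := by linarith
  set T := S.filter (fun w => w < y) with hT
  have hTne : T.Nonempty := ⟨s, Finset.mem_filter.mpr ⟨hsS, hsy⟩⟩
  set x := T.max' hTne with hxdef
  have hxT : x ∈ T := Finset.max'_mem _ _
  have hxS : x ∈ S := (Finset.mem_filter.mp hxT).1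
  have hxy : x < y := (Finset.mem_filter.mp hxT).2
  have hmax : ∀ w ∈ S, w < y → w ≤ x := fun w hw hwy =>
    Finset.le_max' T w (Finset.mem_filter.mpr ⟨hw, hwy⟩)
  have hgap := convex_gap S hSconv x y z hxS hyS hzS hxy hyz hmax
  have h2k₂ : (2:ℝ) ≤ (k₂:ℝ) := by exact_mod_cast (by omega : 2 ≤ k₂)
  have h2k₂M : (2:ℝ) * M ^ n ≤ (k₂:ℝ) * M ^ n :=
    mul_le_mul_of_nonneg_right h2k₂ (le_of_lt hMn)
  rcases hAA x (hS hxS) with hx0 | ⟨k, j, hj1, hk1', hjkn, hxeq⟩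
  · linarith
  · have hxD : x ∈ D k := by
      rw [hD k, Finset.mem_image]
      exact ⟨j, Finset.mem_Icc.mpr ⟨hj1, by omega⟩, hxeq.symm⟩
    obtain ⟨hx_lo, hx_hi⟩ := hDk k hk1' (by omega) x hxD
    rcases lt_trichotomy k k₂ with h | h | h
    · have hkk : (k:ℝ) + 1 ≤ (k₂:ℝ) := by exact_mod_cast h
      have : ((k:ℝ) + 1) * M ^ n ≤ (k₂:ℝ) * M ^ n :=
        mul_le_mul_of_nonneg_right hkk (le_of_lt hMn)
      linarith
    · subst h
      have : y ≤ x := Finset.min'_le _ _ (Finset.mem_inter.mpr ⟨hxS, hxD⟩)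
      linarith
    · have hkk : (k₂:ℝ) + 1 ≤ (k:ℝ) := by exact_mod_cast h
      have : ((k₂:ℝ) + 1) * M ^ n ≤ (k:ℝ) * M ^ n :=
        mul_le_mul_of_nonneg_right hkk (le_of_lt hMn)
      linarith
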